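/- Let Γ be a finite-dimensional n-Gorenstein algebra. Then every finitely generated Γ-module of finite injective dimension has injective dimension at most n. -/

import Mathlib

/-- `M` has projective dimension at most `m` over `R`. -/
def ProjDimLE (R : Type) [Ring R] : ℕ → (M : Type) → [AddCommGroup M] → [Module R M] → Prop
  | 0, M, _, _ => Module.Projective R M
  | (m+1), M, _, _ => ∃ (P : Type) (_ : AddCommGroup P) (_ : Module R P)
      (f : P →ₗ[R] M), Module.Projective R P ∧ Function.Surjective f ∧
      ProjDimLE R m (LinearMap.ker f)

/-- `M` has injective dimension at most `m` over `R`. -/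
def InjDimLE (R : Type) [Ring R] : ℕ → (M : Type) → [AddCommGroup M] → [Module R M] → Prop
  | 0, M, _, _ => Module.Injective R M
  | (m+1), M, _, _ => ∃ (I : Type) (_ : AddCommGroup I) (_ : Module R I)
      (f : M →ₗ[R] I), Module.Injective R I ∧ Function.Injective f ∧
      InjDimLE R m (I ⧸ LinearMap.range f)

/-- `Q` is an `s`-th cosyzygy: there is an exact sequence
`0 → Q' → J_1 → ⋯ → J_s → Q → 0` with the `J_i` injective. -/
def IsCosyz (R : Type) [Ring R] : ℕ → (Q : Type) → [AddCommGroup Q] → [Module R Q] → Prop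
  | 0, _, _, _ => True
  | (s+1), Q, _, _ => ∃ (J : Type) (_ : AddCommGroup J) (_ : Module R J)
      (π : J →ₗ[R] Q), Module.Injective R J ∧ Function.Surjective π ∧
      IsCosyz R s (LinearMap.ker π)

section Aux

variable (R : Type) [Ring R]

lemma injective_of_retract (M I : Type) [AddCommGroup M] [Module R M]
    [AddCommGroup I] [Module R I] (ι : M →ₗ[R] I) (r : I →ₗ[R] M)
    (hri : ∀ x, r (ι x) = x) (hI : Module.Injective R I) : Module.Injective R M := by
  constructor
  intro X Y _ _ _ _ f hf g
  obtain ⟨h, hh⟩ := hI.out f hf (ι.comp g)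
  refine ⟨r.comp h, fun x => ?_⟩
  simp only [LinearMap.coe_comp, Function.comp_apply] at hh ⊢
  rw [hh x, hri]

lemma injective_of_subsingleton (M : Type) [AddCommGroup M] [Module R M]
    [Subsingleton M] : Module.Injective R M := by
  constructor
  intro X Y _ _ _ _ f _ g
  exact ⟨0, fun x => Subsingleton.elim _ _⟩

lemma isCosyz_congr : ∀ (s : ℕ) (Q : Type) [AddCommGroup Q] [Module R Q]
    (Q' : Type) [AddCommGroup Q'] [Module R Q'] (e : Q ≃ₗ[R] Q'),
    IsCosyz R s Q → IsCosyz R s Q' := by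
  intro s
  cases s with
  | zero => intro Q _ _ Q' _ _ e _; trivial
  | succ s =>
    intro Q _ _ Q' _ _ e h
    have h' : ∃ (J : Type) (_ : AddCommGroup J) (_ : Module R J)
        (π : J →ₗ[R] Q), Module.Injective R J ∧ Function.Surjective π ∧
        IsCosyz R s (LinearMap.ker π) := h
    obtain ⟨J, _, _, π, hJ, hπ, hk⟩ := h'
    refine ⟨J, _, _, (e : Q →ₗ[R] Q').comp π, hJ, ?_, ?_⟩
    · intro q'
      obtain ⟨j, hj⟩ := hπ (e.symm q')
      exact ⟨j, by simp [hj]⟩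
    · have hker : LinearMap.ker ((e : Q →ₗ[R] Q').comp π) = LinearMap.ker π := by
        rw [LinearMap.ker_comp, LinearEquiv.ker, Submodule.comap_bot]
      rw [hker]
      exact hk

lemma injDimLE_of_injective : ∀ (t : ℕ) (M : Type) [AddCommGroup M] [Module R M],
    Module.Injective R M → InjDimLE R t M := by
  intro t
  induction t with
  | zero => intro M _ _ h; exact h
  | succ t ih =>
    intro M _ _ h
    refine ⟨M, _, _, LinearMap.id, h, fun a b hab => hab, ?_⟩
    haveI : Subsingleton (M ⧸ LinearMap.range (LinearMap.id : M →ₗ[R] M)) := by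
      rw [Submodule.Quotient.subsingleton_iff]
      exact LinearMap.range_id
    exact ih _ (injective_of_subsingleton R _)

lemma injDimLE_mono : ∀ (s t : ℕ), s ≤ t → ∀ (M : Type) [AddCommGroup M] [Module R M],
    InjDimLE R s M → InjDimLE R t M := by
  intro s
  induction s with
  | zero => intro t _ M _ _ h; exact injDimLE_of_injective R t M h
  | succ s ih =>
    intro t hst M _ _ h
    obtain ⟨t', rfl⟩ : ∃ t', t = t' + 1 := ⟨t - 1, by omega⟩
    have h' : ∃ (I : Type) (_ : AddCommGroup I) (_ : Module R I)
        (f : M →ₗ[R] I), Module.Injective R I ∧ Function.Injective f ∧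
        InjDimLE R s (I ⧸ LinearMap.range f) := h
    obtain ⟨I, _, _, f, hI, hf, hC⟩ := h'
    exact ⟨I, _, _, f, hI, hf, ih t' (by omega) _ hC⟩

/-- Key splitting lemma (a concrete form of `Ext¹(X, Q) = 0` when `pd X ≤ j` and `Q` is a
`j`-th cosyzygy): any surjection onto a module of projective dimension at most `j`, whose
kernel is a `j`-th cosyzygy, splits. -/
lemma split_of_projDimLE : ∀ (j : ℕ) (X : Type) [AddCommGroup X] [Module R X]
    (Y : Type) [AddCommGroup Y] [Module R Y] (p : Y →ₗ[R] X),
    Function.Surjective p → ProjDimLE R j X → IsCosyz R j (LinearMap.ker p) →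
    ∃ σ : X →ₗ[R] Y, ∀ x, p (σ x) = x := by
  intro j
  induction j with
  | zero =>
    intro X _ _ Y _ _ p hp hX _
    haveI : Module.Projective R X := hX
    obtain ⟨σ, hσ⟩ := Module.projective_lifting_property p LinearMap.id hp
    exact ⟨σ, fun x => DFunLike.congr_fun hσ x⟩
  | succ j ih =>
    intro X _ _ Y _ _ p hp hX hcos
    have hX' : ∃ (P : Type) (_ : AddCommGroup P) (_ : Module R P)
        (fP : P →ₗ[R] X), Module.Projective R P ∧ Function.Surjective fP ∧
        ProjDimLE R j (LinearMap.ker fP) := hX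
    obtain ⟨P, _, _, fP, hP, hfP, hK⟩ := hX'
    have hcos' : ∃ (J : Type) (_ : AddCommGroup J) (_ : Module R J)
        (π : J →ₗ[R] LinearMap.ker p), Module.Injective R J ∧ Function.Surjective π ∧
        IsCosyz R j (LinearMap.ker π) := hcos
    obtain ⟨J, _, _, π, hJ, hπ, hkπ⟩ := hcos'
    haveI := hP
    obtain ⟨ψ, hψ⟩ := Module.projective_lifting_property p fP hp
    have hψ' : ∀ y : P, p (ψ y) = fP y := fun y => DFunLike.congr_fun hψ y
    -- the induced map from ker fP to ker p
    have hw : ∀ kk : LinearMap.ker fP, (ψ.comp (LinearMap.ker fP).subtype) kk ∈ LinearMap.ker p := by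
      intro kk
      simp only [LinearMap.mem_ker, LinearMap.coe_comp, Function.comp_apply,
        Submodule.coe_subtype]
      rw [hψ' kk.1]
      exact kk.2
    set w : (LinearMap.ker fP) →ₗ[R] (LinearMap.ker p) :=
      LinearMap.codRestrict (LinearMap.ker p) (ψ.comp (LinearMap.ker fP).subtype) hw with hw_def
    have hw_val : ∀ kk : LinearMap.ker fP, ((w kk : Y)) = ψ kk.1 := fun kk => rfl
    -- the pullback of π along w
    set d : (J × LinearMap.ker fP) →ₗ[R] LinearMap.ker p :=
      π.comp (LinearMap.fst R J (LinearMap.ker fP)) -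
        w.comp (LinearMap.snd R J (LinearMap.ker fP)) with hd_def
    have hd_apply : ∀ z : J × LinearMap.ker fP, d z = π z.1 - w z.2 := fun z => rfl
    set Z := LinearMap.ker d with hZ_def
    set pr2 : Z →ₗ[R] LinearMap.ker fP :=
      (LinearMap.snd R J (LinearMap.ker fP)).comp Z.subtype with hpr2_def
    have hpr2_apply : ∀ z : Z, pr2 z = (z : J × LinearMap.ker fP).2 := fun z => rfl
    have hpr2 : Function.Surjective pr2 := by
      intro k
      obtain ⟨j0, hj0⟩ := hπ (w k)
      refine ⟨⟨(j0, k), ?_⟩, rfl⟩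
      show d (j0, k) = 0
      rw [hd_apply]
      simp [hj0]
    -- the kernel of pr2 is isomorphic to the kernel of π
    have hm1 : ∀ x : LinearMap.ker π,
        ((LinearMap.inl R J (LinearMap.ker fP)).comp (LinearMap.ker π).subtype) x ∈ Z := by
      intro x
      show d (x.1, 0) = 0
      rw [hd_apply]
      simp [x.2]
    have hm2 : ∀ x : LinearMap.ker π,
        (LinearMap.codRestrict Z _ hm1) x ∈ LinearMap.ker pr2 := by
      intro x
      simp only [LinearMap.mem_ker]
      rfl
    set m3 : (LinearMap.ker π) →ₗ[R] (LinearMap.ker pr2) :=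
      LinearMap.codRestrict (LinearMap.ker pr2) (LinearMap.codRestrict Z _ hm1) hm2 with hm3_def
    have hm3_val : ∀ x : LinearMap.ker π,
        (((m3 x : LinearMap.ker pr2) : Z) : J × LinearMap.ker fP) = (x.1, 0) := fun x => rfl
    have hm3_bij : Function.Bijective m3 := by
      constructor
      · intro a b hab
        apply Subtype.ext
        have h1 := congrArg (fun z : LinearMap.ker pr2 =>
          ((z : Z) : J × LinearMap.ker fP).1) hab
        simpa [hm3_val] using h1
      · rintro ⟨⟨⟨j1, k1⟩, hz⟩, hz2⟩
        have hk1 : k1 = 0 := by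
          simpa [hpr2_apply] using hz2
        have hj1 : j1 ∈ LinearMap.ker π := by
          have : d (j1, k1) = 0 := hz
          rw [hd_apply] at this
          simp only [LinearMap.mem_ker]
          rw [hk1] at this
          simpa [sub_eq_zero] using this
        refine ⟨⟨j1, hj1⟩, ?_⟩
        apply Subtype.ext
        apply Subtype.ext
        rw [hm3_val]
        simp [hk1]
    have hkerpr2 : IsCosyz R j (LinearMap.ker pr2) :=
      isCosyz_congr R j _ _ (LinearEquiv.ofBijective m3 hm3_bij) hkπ
    -- apply the inductive hypothesis to pr2
    obtain ⟨σ', hσ'⟩ := ih (LinearMap.ker fP) Z pr2 hpr2 hK hkerpr2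
    set lam : (LinearMap.ker fP) →ₗ[R] J :=
      (LinearMap.fst R J (LinearMap.ker fP)).comp (Z.subtype.comp σ') with hlam_def
    have hlam : ∀ kk : LinearMap.ker fP, π (lam kk) = w kk := by
      intro kk
      have hz : d ((σ' kk : Z) : J × LinearMap.ker fP) = 0 := (σ' kk).2
      rw [hd_apply] at hz
      have h2 : ((σ' kk : Z) : J × LinearMap.ker fP).2 = kk := hσ' kk
      rw [h2, sub_eq_zero] at hz
      exact hz
    -- extend lam along the inclusion ker fP ↪ P using the injectivity of J
    obtain ⟨Λ, hΛ⟩ := hJ.out (LinearMap.ker fP).subtype (Submodule.injective_subtype _) lam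
    set ψ2 : P →ₗ[R] Y := ψ - (LinearMap.ker p).subtype.comp (π.comp Λ) with hψ2_def
    have hψ2_apply : ∀ y : P, ψ2 y = ψ y - ((π (Λ y) : LinearMap.ker p) : Y) := fun y => rfl
    have hψ2p : ∀ y : P, p (ψ2 y) = fP y := by
      intro y
      rw [hψ2_apply, map_sub, hψ' y, (π (Λ y)).2, sub_zero]
    have hkerψ2 : LinearMap.ker fP ≤ LinearMap.ker ψ2 := by
      intro k hk
      simp only [LinearMap.mem_ker]
      have h1 : Λ k = lam ⟨k, hk⟩ := hΛ ⟨k, hk⟩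
      rw [hψ2_apply, h1, hlam ⟨k, hk⟩, hw_val ⟨k, hk⟩]
      exact sub_self _
    -- factor ψ2 through X
    set e := fP.quotKerEquivOfSurjective hfP with he_def
    set σ : X →ₗ[R] Y :=
      (Submodule.liftQ (LinearMap.ker fP) ψ2 hkerψ2).comp e.symm.toLinearMap with hσ_def
    refine ⟨σ, fun x => ?_⟩
    obtain ⟨y, rfl⟩ := hfP x
    have hey : e (Submodule.Quotient.mk y) = fP y := rfl
    have he : e.symm (fP y) = Submodule.Quotient.mk y := by
      apply e.injective
      rw [LinearEquiv.apply_symm_apply, hey]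
    have hσy : σ (fP y) = ψ2 y := by
      rw [hσ_def]
      simp only [LinearMap.coe_comp, Function.comp_apply, LinearEquiv.coe_coe]
      rw [he, Submodule.liftQ_apply]
    rw [hσy, hψ2p]

end Aux

section Key

variable (Γ : Type) [Ring Γ] (n : ℕ)
variable (hGor₁ : ∀ (N : Type) [AddCommGroup N] [Module Γ N],
      Module.Injective Γ N → ProjDimLE Γ n N)

include hGor₁ in
/-- If `M` is a `t`-th cosyzygy with `s + t = n` and `InjDimLE (s+1) M`, then
`InjDimLE s M`. -/
lemma keyE : ∀ (s t : ℕ), s + t = n → ∀ (M : Type) [AddCommGroup M] [Module Γ M],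
    IsCosyz Γ t M → InjDimLE Γ (s+1) M → InjDimLE Γ s M := by
  intro s
  induction s with
  | zero =>
    intro t ht M _ _ hcos h
    have hcosn : IsCosyz Γ n M := by
      rw [show n = t from by omega]; exact hcos
    have h' : ∃ (I : Type) (_ : AddCommGroup I) (_ : Module Γ I)
        (f : M →ₗ[Γ] I), Module.Injective Γ I ∧ Function.Injective f ∧
        InjDimLE Γ 0 (I ⧸ LinearMap.range f) := h
    obtain ⟨I, _, _, f, hI, hf, hC⟩ := h'
    have hCinj : Module.Injective Γ (I ⧸ LinearMap.range f) := hC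
    have hpd : ProjDimLE Γ n (I ⧸ LinearMap.range f) := hGor₁ _ hCinj
    -- the quotient map splits
    have hkerq : IsCosyz Γ n (LinearMap.ker (LinearMap.range f).mkQ) := by
      rw [Submodule.ker_mkQ]
      exact isCosyz_congr Γ n M _ (LinearEquiv.ofInjective f hf) hcosn
    obtain ⟨σ, hσ⟩ := split_of_projDimLE Γ n _ I (LinearMap.range f).mkQ
      (Submodule.mkQ_surjective _) hpd hkerq
    -- build a retraction I → M
    have hr' : ∀ y : I, y - σ ((LinearMap.range f).mkQ y) ∈ LinearMap.range f := by
      intro y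
      rw [← Submodule.Quotient.mk_eq_zero]
      have : ((LinearMap.range f).mkQ) (y - σ ((LinearMap.range f).mkQ y)) = 0 := by
        rw [map_sub, hσ, sub_self]
      simpa using this
    set r' : I →ₗ[Γ] I := LinearMap.id - σ.comp (LinearMap.range f).mkQ with hr'_def
    have hr'_apply : ∀ y : I, r' y = y - σ ((LinearMap.range f).mkQ y) := fun y => rfl
    have hr'mem : ∀ y : I, r' y ∈ LinearMap.range f := by
      intro y; rw [hr'_apply]; exact hr' y
    set r : I →ₗ[Γ] M := (LinearEquiv.ofInjective f hf).symm.toLinearMap.comp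
      (LinearMap.codRestrict (LinearMap.range f) r' hr'mem) with hr_def
    have hretr : ∀ m : M, r (f m) = m := by
      intro m
      have h1 : r' (f m) = f m := by
        rw [hr'_apply]
        have : ((LinearMap.range f).mkQ) (f m) = 0 := by
          simpa using (Submodule.Quotient.mk_eq_zero _).mpr ⟨m, rfl⟩
        rw [this, map_zero, sub_zero]
      have h2 : (LinearMap.codRestrict (LinearMap.range f) r' hr'mem) (f m)
          = ⟨f m, ⟨m, rfl⟩⟩ := by
        apply Subtype.ext
        simpa using h1
      rw [hr_def]
      simp only [LinearMap.coe_comp, Function.comp_apply, LinearEquiv.coe_coe]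
      rw [h2]
      apply (LinearEquiv.ofInjective f hf).injective
      rw [LinearEquiv.apply_symm_apply]
      apply Subtype.ext
      simp [LinearEquiv.ofInjective_apply]
    show Module.Injective Γ M
    exact injective_of_retract Γ M I f r hretr hI
  | succ s ih =>
    intro t ht M _ _ hcos h
    have h' : ∃ (I : Type) (_ : AddCommGroup I) (_ : Module Γ I)
        (f : M →ₗ[Γ] I), Module.Injective Γ I ∧ Function.Injective f ∧
        InjDimLE Γ (s+1) (I ⧸ LinearMap.range f) := h
    obtain ⟨I, _, _, f, hI, hf, hC⟩ := h'
    have hcos' : IsCosyz Γ (t+1) (I ⧸ LinearMap.range f) := by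
      refine ⟨I, _, _, (LinearMap.range f).mkQ, hI, Submodule.mkQ_surjective _, ?_⟩
      rw [Submodule.ker_mkQ]
      exact isCosyz_congr Γ t M _ (LinearEquiv.ofInjective f hf) hcos
    exact ⟨I, _, _, f, hI, hf, ih (t+1) (by omega) _ hcos' hC⟩

include hGor₁ in
lemma keyD : ∀ (d : ℕ) (M : Type) [AddCommGroup M] [Module Γ M],
    InjDimLE Γ (n + d + 1) M → InjDimLE Γ (n + d) M := by
  intro d
  induction d with
  | zero =>
    intro M _ _ h
    exact keyE Γ n hGor₁ n 0 (by omega) M trivial h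
  | succ d ih =>
    intro M _ _ h
    have h' : ∃ (I : Type) (_ : AddCommGroup I) (_ : Module Γ I)
        (f : M →ₗ[Γ] I), Module.Injective Γ I ∧ Function.Injective f ∧
        InjDimLE Γ (n + d + 1) (I ⧸ LinearMap.range f) := h
    obtain ⟨I, _, _, f, hI, hf, hC⟩ := h'
    exact ⟨I, _, _, f, hI, hf, ih _ hC⟩

include hGor₁ in
lemma main_aux : ∀ (m : ℕ) (M : Type) [AddCommGroup M] [Module Γ M],
    InjDimLE Γ m M → InjDimLE Γ n M := by
  intro m
  induction m with
  | zero => intro M _ _ h; exact injDimLE_of_injective Γ n M h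
  | succ m ih =>
    intro M _ _ h
    by_cases hc : m + 1 ≤ n
    · exact injDimLE_mono Γ (m+1) n hc M h
    · obtain ⟨d, rfl⟩ : ∃ d, m = n + d := ⟨m - n, by omega⟩
      exact ih M (keyD Γ n hGor₁ d M h)

end Key

/-- Let Γ be a finite-dimensional n-Gorenstein algebra. Then every finitely generated
Γ-module of finite injective dimension has injective dimension at most n. -/
theorem stmt_1 (k : Type) [Field k] (Γ : Type) [Ring Γ] [Algebra k Γ]
    [FiniteDimensional k Γ] (n : ℕ)
    (hGor₁ : ∀ (N : Type) [AddCommGroup N] [Module Γ N],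
      Module.Injective Γ N → ProjDimLE Γ n N)
    (hGor₂ : ∀ (N : Type) [AddCommGroup N] [Module Γ N],
      Module.Projective Γ N → InjDimLE Γ n N)
    (M : Type) [AddCommGroup M] [Module Γ M] [Module.Finite Γ M]
    (hfin : ∃ m : ℕ, InjDimLE Γ m M) :
    InjDimLE Γ n M := by
  obtain ⟨m, hm⟩ := hfin
  exact main_aux Γ n hGor₁ m M hm
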